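/- Let I be a nonempty finite set, C ≤ Z₂^I a Z₂-subspace with 1_I ∈ C (the all-ones vector), and define D := span_{Z₂}({1_{Z₆^I}} ∪ {L_a : a ∈ C}) ≤ Z₂^{Z₆^I}. Then: (i) D is invariant under the translation action of Z₆^I (Trans_v F := F(· − v)); (ii) D^⊥ ∩ {W ∈ Z₂^{Z₆^I} : spt W ⊆ B} = ξ(C^⊥); and (iii) for all V, V' : Z₆^I → Z₂ supported on B, the infimum inf{TS_Ham(V, W) : W ∈ V' + D^⊥} is attained at some W ∈ V' + D^⊥ that is also supported on B. -/

import Mathlib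

open scoped BigOperators
open scoped Classical
open MeasureTheory Filter
open scoped ENNReal NNReal

noncomputable section

/-- The length of the shortest word in the alphabet `Gens` leading from `x` to `y`
under the (not necessarily associative) multiplication `mul`. -/
def wordLen {α : Type*} (mul : α → α → α) (Gens : Set α) (x y : α) : ℕ :=
  sInf {ℓ : ℕ | ∃ w : List α, (∀ g ∈ w, g ∈ Gens) ∧ w.length = ℓ ∧ w.foldl mul x = y}

/-- The word metric on a group associated with a generating set `S`. -/
def groupWordDist {G : Type*} [Group G] (S : Set G) (g h : G) : ℕ :=
  wordLen (· * ·) S g h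

/-- A group has exponential growth w.r.t. a generating set `S` if there is `c > 1`
such that the ball of radius `r` about the identity contains at least `c ^ r`
points for infinitely many positive integers `r`. -/
def HasExpGrowth {G : Type*} [Group G] (S : Set G) : Prop :=
  ∃ c : ℝ, 1 < c ∧ ∀ N : ℕ, ∃ r : ℕ, N ≤ r ∧ 0 < r ∧
    ∃ T : Finset G, (∀ g ∈ T, groupWordDist S 1 g ≤ r) ∧ (c : ℝ) ^ r ≤ (T.card : ℝ)

/-- The pinned travelling salesman metric associated with the distance function `ρ`
and basepoint `x0`, evaluated on two (finitely supported) functions `X → ZMod 2`. -/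
def TS {X : Type*} (ρ : X → X → ℝ) (x0 : X) (A B : X → ZMod 2) : ℝ :=
  if A = B then 0
  else 1 + sInf {L : ℝ | ∃ (ℓ : ℕ) (x : ℕ → X), 1 ≤ ℓ ∧ x 0 = x0 ∧ x ℓ = x0 ∧
    (∀ p : X, A p + B p ≠ 0 → ∃ i < ℓ, x i = p) ∧
    L = ∑ i ∈ Finset.range ℓ, ρ (x i) (x (i + 1))}

/-- The quotient of an addition-invariant distance function `d` by the subgroup `F`,
expressed on representatives: `quotDistBy d F x y = inf_{v ∈ F} d x (y + v)`. -/
def quotDistBy {E : Type*} [Add E] (d : E → E → ℝ) (F : Set E) (x y : E) : ℝ :=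
  sInf {r : ℝ | ∃ v ∈ F, r = d x (y + v)}

/-- The distortion of a map `f` between "metric" spaces `(Y, σ)` and `(Z, θ)`, where the
suprema defining it run over pairs satisfying the apartness relation `P`
(typically: `≠`, or "lying in distinct cosets"). -/
def distortionOn {Y Z : Type*} (σ : Y → Y → ℝ) (θ : Z → Z → ℝ)
    (P : Y → Y → Prop) (f : Y → Z) : ℝ :=
  sSup {r : ℝ | ∃ u v, P u v ∧ r = θ (f u) (f v) / σ u v} *
  sSup {r : ℝ | ∃ u v, P u v ∧ r = σ u v / θ (f u) (f v)}

/-- Multiplication of the (restricted) wreath-product-style semidirect product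
`M^{⊕H} ⋊ H`, where `H` has multiplication `hmul` and acts on `H →₀ M` by
coordinate right-translation:
`(a, h₁) · (b, h₂) = ((a (· h₂⁻¹)) + b, h₁ h₂)`. -/
def wrMul {H M : Type*} [AddCommMonoid M] (hmul : H → H → H) :
    ((H →₀ M) × H) → ((H →₀ M) × H) → ((H →₀ M) × H) :=
  fun x y => (Finsupp.mapDomain (fun h => hmul h y.2) x.1 + y.1, hmul x.2 y.2)

/-- The lifted generating set `{(±e_{e_G}, e_G)} ∪ {(0, s) : s ∈ S}` of `Z₆ ≀ G`. -/
def liftGens6 {G : Type*} [Group G] (S : Set G) : Set ((G →₀ ZMod 6) × G) :=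
  {p | p = (Finsupp.single (1 : G) (1 : ZMod 6), (1 : G)) ∨
       p = (Finsupp.single (1 : G) (-1 : ZMod 6), (1 : G)) ∨
       (p.1 = 0 ∧ p.2 ∈ S)}

/-- The lifted generating set `{(δ_{e_H}, e_H)} ∪ {(0, t) : t ∈ T}` of `Z₂^{⊕H} ⋊ H`
(and, after quotienting by an invariant subspace `V`, of `(Z₂^{⊕H}/V) ⋊ H`). -/
def liftGens2 {H : Type*} (eH : H) (T : Set H) : Set ((H →₀ ZMod 2) × H) :=
  {p | p = (Finsupp.single eH (1 : ZMod 2), eH) ∨ (p.1 = 0 ∧ p.2 ∈ T)}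

/-- The word metric of the quotient group `(Z₂^{⊕H}/V) ⋊ H` (`V` an `H`-invariant
subspace of `Z₂^{⊕H}`), expressed on representatives in `Z₂^{⊕H} × H`: the least
length of a word in `Gens` leading from `x` to some representative of the coset
of `y`. -/
def quotWordLen {H : Type*} (hmul : H → H → H) (V : Set (H →₀ ZMod 2))
    (Gens : Set ((H →₀ ZMod 2) × H)) (x y : (H →₀ ZMod 2) × H) : ℕ :=
  sInf {ℓ : ℕ | ∃ w : List ((H →₀ ZMod 2) × H), (∀ g ∈ w, g ∈ Gens) ∧ w.length = ℓ ∧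
    ∃ v ∈ V, w.foldl (wrMul hmul) x = (y.1 + v, y.2)}

/-- The word metric on `Z₆ = ZMod 6` for the generating set `{1, -1}`. -/
def z6dist (a b : ZMod 6) : ℕ := min (b - a).val (a - b).val

/-- The Hamming metric on `Z₆^I` built from the word metric on each factor. -/
def hamZ6 {I : Type*} [Fintype I] (u v : I → ZMod 6) : ℝ :=
  ∑ x, (z6dist (u x) (v x) : ℝ)

/-- The pinned travelling salesman metric on `Z₂^{Z₆^I}` over `(Z₆^I, d_Ham)`,
pinned at `0`. -/
def TSHam {I : Type*} [Fintype I] (A B : (I → ZMod 6) → ZMod 2) : ℝ :=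
  TS hamZ6 (0 : I → ZMod 6) A B

/-- Coordinatewise reduction `Z₆ → Z₂`. -/
def zbar (a : ZMod 6) : ZMod 2 := (a.val : ZMod 2)

/-- The `Z₂`-valued inner product on `Z₂^I`. -/
def ip2 {I : Type*} [Fintype I] (a b : I → ZMod 2) : ZMod 2 := ∑ x, a x * b x

/-- The annihilator of a set `C ⊆ Z₂^I`. -/
def perp2 {I : Type*} [Fintype I] (C : Set (I → ZMod 2)) : Set (I → ZMod 2) :=
  {a | ∀ c ∈ C, ip2 a c = 0}

/-- The `Z₂`-valued inner product on `Z₂^α` for a finite type `α`. -/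
def ipF {α : Type*} [Fintype α] (W V : α → ZMod 2) : ZMod 2 := ∑ w, W w * V w

/-- The linear functional `L_a : Z₆^I → Z₂`, `L_a(v) = ⟨v̄, a⟩`. -/
def La {I : Type*} [Fintype I] (a : I → ZMod 2) : (I → ZMod 6) → ZMod 2 :=
  fun v => ∑ x, zbar (v x) * a x

/-- The subspace `D = span({1} ∪ {L_a : a ∈ C}) ≤ Z₂^{Z₆^I}`. -/
def Dspan {I : Type*} [Fintype I] (C : Set (I → ZMod 2)) :
    Submodule (ZMod 2) ((I → ZMod 6) → ZMod 2) :=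
  Submodule.span (ZMod 2) ({fun _ => (1 : ZMod 2)} ∪ (La '' C))

/-- The annihilator `D^⊥` of `D = span({1} ∪ {L_a : a ∈ C})` inside `Z₂^{Z₆^I}`. -/
def DperpSet {I : Type*} [Fintype I] (C : Set (I → ZMod 2)) :
    Set ((I → ZMod 6) → ZMod 2) :=
  {W | ∀ D' ∈ Dspan C, ipF W D' = 0}

/-- The set `B = {e_x : x ∈ I}` of standard basis vectors in `Z₆^I`. -/
def Bset {I : Type*} [Fintype I] : Set (I → ZMod 6) :=
  Set.range (fun x : I => Pi.single x (1 : ZMod 6))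

/-- The embedding `ξ : Z₂^I → Z₂^{Z₆^I}`: `ξ(a)` is supported on `B` with
`ξ(a)(e_x) = a_x`. -/
def xi {I : Type*} [Fintype I] (a : I → ZMod 2) : (I → ZMod 6) → ZMod 2 :=
  fun w => ∑ x : I, if w = (Pi.single x (1 : ZMod 6) : I → ZMod 6) then a x else 0

/-- The map `R : Z₂^{Z₆^I} → Z₂^{Z₆^I}`: `R(W)` is supported on `B` with
`R(W)(e_x) = Σ_w W(w)·⟨ē_x, w̄⟩`. -/
def Rmap {I : Type*} [Fintype I] (W : (I → ZMod 6) → ZMod 2) :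
    (I → ZMod 6) → ZMod 2 :=
  fun w => ∑ x : I, if w = (Pi.single x (1 : ZMod 6) : I → ZMod 6) then (∑ v : I → ZMod 6, W v * zbar (v x)) else 0

/-- The indicator function `𝒜 : Z₆ → Z₂` of `{0, 1, 3, 4} ⊆ Z₆`. -/
def Acal : ZMod 6 → ZMod 2 := fun v => if v = 0 ∨ v = 1 ∨ v = 3 ∨ v = 4 then 1 else 0


/-- The map `Q_n` of the paper: given the excluded region `E` (which should equal
`I₁ ∪ ⋯ ∪ Iₙ ∪ {y₁, …, yₙ}`), the set `Iₙ = In`, the point `yₙ = yn`,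
a vector `u ∈ Z₆^{⊕(X∖E)}`, a function `W ∈ Z₂^{Z₆^{Iₙ}}` and `u' ∈ Z₆`,
`Qmap E In yn u W u'` is the element of `Z₂^{Z₆^{⊕X}}` given by
`w ↦ [w|_{X∖E} = u|_{X∖E}] ⬝ W(w|_{Iₙ}) ⬝ 𝒜(w_{yₙ} - u')`. -/
def Qmap {X : Type*} (E : Set X) (In : Finset X) (yn : X)
    (u : X →₀ ZMod 6) (W : ({x // x ∈ In} → ZMod 6) → ZMod 2) (u' : ZMod 6) :
    (X →₀ ZMod 6) → ZMod 2 :=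
  fun w => (if ∀ x ∉ E, w x = u x then 1 else 0) *
    W (fun x => w x.1) * Acal (w yn - u')

/-- The finite set `Eₙ = I₁ ∪ ⋯ ∪ Iₙ ∪ {y₁, …, yₙ}` (with indexing starting at `0`). -/
def EFin {G : Type*} (I : ℕ → Finset G) (y : ℕ → G) (n : ℕ) : Finset G :=
  ((Finset.range (n + 1)).biUnion I) ∪ (Finset.range (n + 1)).image y

/-- The function `Q̃ₙ(0, W, 0) ∈ Z₂^{⊕(Z₆ ≀ G)}`, realized as a finitely supported
function: it is supported on pairs `(w, e_G)` with `w` supported inside `E`, and its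
value there is `W(w|_{Iₙ}) ⬝ 𝒜(w_{yₙ})`.  (Here `E` should contain `Iₙ` and `yₙ`;
it will be `EFin I y n`.) -/
def QF {G : Type*} [Group G] (E : Finset G) (In : Finset G) (yn : G)
    (W : ({x // x ∈ In} → ZMod 6) → ZMod 2) : (((G →₀ ZMod 6) × G) →₀ ZMod 2) :=
  ∑ f : ({x // x ∈ E} → ZMod 6),
    Finsupp.single ((∑ x ∈ E.attach, Finsupp.single (x : G) (f x), (1 : G)))
      (W (fun x => if h : (x : G) ∈ E then f ⟨x, h⟩ else 0) *
        Acal (if h : yn ∈ E then f ⟨yn, h⟩ else 0))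

/-- Given a translation-invariant subspace `U ≤ Z₂^{⊕((Z₆ ≀ G)₀)}` (the zero section
being identified with `Z₆^{⊕G}`), the subspace
`V := {𝒱 ∈ Z₂^{⊕(Z₆ ≀ G)} : ∀ g₁, ((w_g)_g ↦ 𝒱((w_{g g₁⁻¹})_g, g₁)) ∈ U}`. -/
def Vext {G : Type*} [Group G] (U : Set ((G →₀ ZMod 6) →₀ ZMod 2)) :
    Set (((G →₀ ZMod 6) × G) →₀ ZMod 2) :=
  {V : ((G →₀ ZMod 6) × G) →₀ ZMod 2 | ∀ g₁ : G, ∃ u ∈ U,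
    ∀ w : G →₀ ZMod 6, u w = V (Finsupp.mapDomain (· * g₁) w, g₁)}

/-- Extension by zero of a function on the zero section `(Z₆ ≀ G)₀ ≅ Z₆^{⊕G}`
to all of `Z₆ ≀ G`. -/
def extZero {G : Type*} [Group G] (A : (G →₀ ZMod 6) →₀ ZMod 2) :
    ((G →₀ ZMod 6) × G) →₀ ZMod 2 :=
  Finsupp.mapDomain (fun w => (w, (1 : G))) A

end

section Aux
open Finset

lemma zbar_sub : ∀ a b : ZMod 6, zbar (a - b) = zbar a + zbar b := by decide

lemma zbar_eqzero : zbar 0 = 0 := by decide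

lemma z6_tri : ∀ a b c : ZMod 6, z6dist a c ≤ z6dist a b + z6dist b c := by decide

lemma z6_self : ∀ a : ZMod 6, z6dist a a = 0 := by decide

lemma z6_pos_left : ∀ c : ZMod 6, c ≠ 0 → 1 ≤ z6dist 0 c := by decide

lemma z6_pos_right : ∀ c : ZMod 6, c ≠ 0 → 1 ≤ z6dist c 0 := by decide

lemma z6_path (g : ℕ → ZMod 6) (m n : ℕ) (h : m ≤ n) :
    z6dist (g m) (g n) ≤ ∑ j ∈ Finset.Ico m n, z6dist (g j) (g (j + 1)) := by
  induction n, h using Nat.le_induction with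
  | base => simp [z6_self]
  | succ n hmn ih =>
      rw [Finset.sum_Ico_succ_top (by omega)]
      exact le_trans (z6_tri (g m) (g n) (g (n+1))) (Nat.add_le_add_right ih _)

lemma z6_tour (g : ℕ → ZMod 6) (ℓ i : ℕ) (hi : i < ℓ) (h0 : g 0 = 0) (hl : g ℓ = 0)
    (hv : g i ≠ 0) : 2 ≤ ∑ j ∈ Finset.range ℓ, z6dist (g j) (g (j + 1)) := by
  have h1 := z6_path g 0 i (by omega)
  have h2 := z6_path g i ℓ (by omega)
  rw [h0] at h1
  rw [hl] at h2
  have hsplit : ∑ j ∈ Finset.range ℓ, z6dist (g j) (g (j + 1)) =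
      (∑ j ∈ Finset.Ico 0 i, z6dist (g j) (g (j + 1))) +
      ∑ j ∈ Finset.Ico i ℓ, z6dist (g j) (g (j + 1)) := by
    rw [Finset.range_eq_Ico, ← Finset.sum_Ico_consecutive _ (Nat.zero_le i) (le_of_lt hi)]
  rw [hsplit]
  have e1 : 1 ≤ z6dist 0 (g i) := z6_pos_left _ hv
  have e2 : 1 ≤ z6dist (g i) 0 := z6_pos_right _ hv
  omega

lemma hamZ6_nonneg {I : Type*} [Fintype I] (u v : I → ZMod 6) : 0 ≤ hamZ6 u v :=
  Finset.sum_nonneg fun _ _ => Nat.cast_nonneg _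

lemma hamZ6_tri {I : Type*} [Fintype I] (u v w : I → ZMod 6) :
    hamZ6 u w ≤ hamZ6 u v + hamZ6 v w := by
  rw [hamZ6, hamZ6, hamZ6, ← Finset.sum_add_distrib]
  refine Finset.sum_le_sum fun x _ => ?_
  exact_mod_cast z6_tri _ _ _

lemma hamZ6_self {I : Type*} [Fintype I] (u : I → ZMod 6) : hamZ6 u u = 0 := by
  simp [hamZ6, z6_self]

lemma ham_zero_single {I : Type*} [Fintype I] (x : I) :
    hamZ6 (0 : I → ZMod 6) (Pi.single x 1) ≤ 1 := by
  rw [hamZ6]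
  rw [Finset.sum_eq_single x]
  · simp [Pi.single_apply]
    norm_num [show z6dist 0 1 = 1 by decide]
  · intro y _ hy
    simp [Pi.single_apply, hy, z6_self]
  · simp

lemma ham_single_zero {I : Type*} [Fintype I] (x : I) :
    hamZ6 (Pi.single x 1 : I → ZMod 6) 0 ≤ 1 := by
  rw [hamZ6]
  rw [Finset.sum_eq_single x]
  · simp [Pi.single_apply]
    norm_num [show z6dist 1 0 = 1 by decide]
  · intro y _ hy
    simp [Pi.single_apply, hy, z6_self]
  · simp

end Aux
section Aux2
open Finset

variable {I : Type*} [Fintype I]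

lemma single_inj {x y : I} (h : (Pi.single x 1 : I → ZMod 6) = Pi.single y 1) : x = y := by
  by_contra hxy
  have := congrFun h x
  simp [Pi.single_apply, hxy] at this
  exact absurd this (by decide)

lemma xi_apply_single (a : I → ZMod 2) (x : I) : xi a (Pi.single x 1) = a x := by
  rw [xi, Finset.sum_eq_single x]
  · simp
  · intro y _ hy
    rw [if_neg]
    intro h
    exact hy (single_inj h.symm)
  · simp

lemma xi_apply_not (a : I → ZMod 2) (w : I → ZMod 6) (hw : w ∉ Bset) : xi a w = 0 := by
  rw [xi]
  refine Finset.sum_eq_zero fun x _ => ?_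
  rw [if_neg]
  intro h
  exact hw ⟨x, h.symm⟩

lemma support_xi (a : I → ZMod 2) : Function.support (xi a) ⊆ Bset := by
  intro w hw
  by_contra h
  exact hw (xi_apply_not a w h)

lemma eq_xi_of_support (W : (I → ZMod 6) → ZMod 2) (h : Function.support W ⊆ Bset) :
    W = xi (fun x => W (Pi.single x 1)) := by
  funext w
  by_cases hw : w ∈ Bset
  · obtain ⟨x, rfl⟩ := hw
    rw [xi_apply_single]
  · rw [xi_apply_not _ _ hw]
    by_contra hW
    exact hw (h hW)

lemma sum_xi_mul (a : I → ZMod 2) (f : (I → ZMod 6) → ZMod 2) :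
    ∑ w, xi a w * f w = ∑ x, a x * f (Pi.single x 1) := by
  simp only [xi, Finset.sum_mul]
  rw [Finset.sum_comm]
  refine Finset.sum_congr rfl fun x _ => ?_
  rw [Finset.sum_eq_single (Pi.single x 1 : I → ZMod 6)]
  · simp
  · intro w _ hw
    rw [if_neg hw, zero_mul]
  · simp

lemma La_single (c : I → ZMod 2) (x : I) : La c (Pi.single x 1) = c x := by
  rw [La, Finset.sum_eq_single x]
  · simp [show zbar 1 = 1 by decide]
  · intro y _ hy
    simp [Pi.single_apply, hy, show zbar 0 = 0 by decide]
  · simp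

lemma ipF_linear (W : (I → ZMod 6) → ZMod 2) :
    ∀ (r : ZMod 2) (A B : (I → ZMod 6) → ZMod 2),
      ipF W (r • A + B) = r * ipF W A + ipF W B := by
  intro r A B
  simp [ipF, Finset.mul_sum, mul_add, Finset.sum_add_distrib, mul_left_comm, mul_comm, mul_assoc]

lemma mem_DperpSet_iff {C : Set (I → ZMod 2)} (W : (I → ZMod 6) → ZMod 2) :
    W ∈ DperpSet C ↔ (ipF W (fun _ => 1) = 0 ∧ ∀ c ∈ C, ipF W (La c) = 0) := by
  constructor
  · intro h
    exact ⟨h _ (Submodule.subset_span (Or.inl rfl)),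
      fun c hc => h _ (Submodule.subset_span (Or.inr ⟨c, hc, rfl⟩))⟩
  · rintro ⟨h1, h2⟩ D' hD'
    induction hD' using Submodule.span_induction with
    | mem y hy =>
        rcases hy with hy | ⟨c, hc, rfl⟩
        · rw [Set.mem_singleton_iff] at hy
          rw [hy]; exact h1
        · exact h2 c hc
    | zero => simp [ipF]
    | add A B _ _ ha hb =>
        have := ipF_linear W 1 A B
        simpa [ha, hb] using this
    | smul r A _ ha =>
        have := ipF_linear W r A 0
        simp only [add_zero] at this
        rw [this, ha, mul_zero]
        simp [ipF]

end Aux2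
section Aux3
open Finset

variable {I : Type*} [Fintype I]

/-- The coefficient vector of `Rmap`. -/
noncomputable def aMap (U : (I → ZMod 6) → ZMod 2) : I → ZMod 2 :=
  fun x => ∑ v, U v * zbar (v x)

lemma Rmap_eq_xi (U : (I → ZMod 6) → ZMod 2) : Rmap U = xi (aMap U) := rfl

lemma aMap_sub (U U' : (I → ZMod 6) → ZMod 2) : aMap (U - U') = aMap U - aMap U' := by
  funext x
  simp [aMap, sub_mul, Finset.sum_sub_distrib]

lemma xi_sub (a b : I → ZMod 2) : xi (a - b) = xi a - xi b := by
  funext w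
  simp only [xi, Pi.sub_apply]
  rw [← Finset.sum_sub_distrib]
  refine Finset.sum_congr rfl fun x _ => ?_
  split <;> simp

lemma Rmap_sub (U U' : (I → ZMod 6) → ZMod 2) : Rmap (U - U') = Rmap U - Rmap U' := by
  rw [Rmap_eq_xi, Rmap_eq_xi, Rmap_eq_xi, aMap_sub, xi_sub]

lemma zbar_single (x y : I) : zbar ((Pi.single x 1 : I → ZMod 6) y) = if y = x then 1 else 0 := by
  simp [Pi.single_apply, apply_ite zbar, show zbar 1 = 1 by decide, show zbar 0 = 0 by decide]

lemma Rmap_xi (a : I → ZMod 2) : Rmap (xi a) = xi a := by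
  rw [Rmap_eq_xi]
  have : aMap (xi a) = a := by
    funext x
    show (∑ v, xi a v * zbar (v x)) = a x
    rw [sum_xi_mul a (fun v => zbar (v x))]
    rw [Finset.sum_eq_single x]
    · simp [zbar_single, show zbar 1 = 1 by decide]
    · intro y _ hy
      simp [zbar_single, hy, Ne.symm hy, show zbar 0 = 0 by decide]
    · simp
  rw [this]

lemma Rmap_fix (W : (I → ZMod 6) → ZMod 2) (h : Function.support W ⊆ Bset) : Rmap W = W := by
  conv_lhs => rw [eq_xi_of_support W h]
  rw [Rmap_xi]
  exact (eq_xi_of_support W h).symm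

lemma ipF_xi_aMap (U : (I → ZMod 6) → ZMod 2) (c : I → ZMod 2) :
    ipF (xi (aMap U)) (La c) = ipF U (La c) := by
  have h2 : ipF U (La c) = ∑ x, aMap U x * c x := by
    rw [ipF]
    simp only [La, Finset.mul_sum]
    rw [Finset.sum_comm]
    refine Finset.sum_congr rfl fun x _ => ?_
    simp only [aMap, Finset.sum_mul]
    refine Finset.sum_congr rfl fun v _ => ?_
    ring
  rw [h2, ipF, sum_xi_mul]
  refine Finset.sum_congr rfl fun x _ => ?_
  rw [La_single]

lemma ipF_xi_aMap_one (U : (I → ZMod 6) → ZMod 2) :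
    ipF (xi (aMap U)) (fun _ => 1) = ipF U (La (fun _ => 1)) := by
  rw [ipF, sum_xi_mul, ipF]
  simp only [mul_one, La, aMap]
  rw [Finset.sum_comm]
  refine Finset.sum_congr rfl fun v _ => ?_
  rw [Finset.mul_sum]

lemma Rmap_mem_Dperp {C : Set (I → ZMod 2)} (h1 : (fun _ => (1 : ZMod 2)) ∈ C)
    (U : (I → ZMod 6) → ZMod 2) (hU : U ∈ DperpSet C) : Rmap U ∈ DperpSet C := by
  rw [Rmap_eq_xi, mem_DperpSet_iff]
  constructor
  · rw [ipF_xi_aMap_one]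
    exact hU _ (Submodule.subset_span (Or.inr ⟨_, h1, rfl⟩))
  · intro c hc
    rw [ipF_xi_aMap]
    exact hU _ (Submodule.subset_span (Or.inr ⟨c, hc, rfl⟩))

lemma zero_mem_Dperp {C : Set (I → ZMod 2)} : (0 : (I → ZMod 6) → ZMod 2) ∈ DperpSet C := by
  intro D' _
  simp [ipF]

end Aux3
section Aux4
open Finset

variable {I : Type*} [Fintype I]

lemma char2_add_eq_sub : ∀ a b : ZMod 2, a + b = a - b := by decide

noncomputable def tourOf (lst : List (I → ZMod 6)) : ℕ → (I → ZMod 6) :=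
  fun i => if h : 1 ≤ i ∧ i ≤ lst.length then lst.get ⟨i - 1, by omega⟩ else 0

lemma tourOf_zero (lst : List (I → ZMod 6)) : tourOf lst 0 = 0 := by
  rw [tourOf]; simp

lemma tourOf_last (lst : List (I → ZMod 6)) : tourOf lst (lst.length + 1) = 0 := by
  rw [tourOf]
  rw [dif_neg]
  omega

lemma tourOf_mem (lst : List (I → ZMod 6)) (p : I → ZMod 6) (hp : p ∈ lst) :
    ∃ i < lst.length + 1, tourOf lst i = p := by
  obtain ⟨j, hj⟩ := List.get_of_mem hp
  refine ⟨j.1 + 1, by omega, ?_⟩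
  rw [tourOf, dif_pos (by omega)]
  simpa using hj

lemma tourOf_ham_le (lst : List (I → ZMod 6)) (h : ∀ q ∈ lst, ∃ y, q = Pi.single y 1) (i : ℕ) :
    hamZ6 (tourOf lst i) 0 ≤ 1 ∧ hamZ6 0 (tourOf lst i) ≤ 1 := by
  rw [tourOf]
  split
  · next hi =>
      obtain ⟨y, hy⟩ := h _ (lst.get_mem _)
      rw [hy]
      exact ⟨ham_single_zero y, ham_zero_single y⟩
  · simp [hamZ6_self]

lemma xi_ne_zero (a : I → ZMod 2) (p : I → ZMod 6) (h : xi a p ≠ 0) :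
    ∃ y, p = Pi.single y 1 ∧ a y ≠ 0 := by
  rw [xi] at h
  obtain ⟨y, -, hy⟩ := Finset.exists_ne_zero_of_sum_ne_zero h
  by_cases hp : p = Pi.single y 1
  · exact ⟨y, hp, by rwa [if_pos hp] at hy⟩
  · rw [if_neg hp] at hy
    exact absurd rfl hy

lemma tour_lower (U : (I → ZMod 6) → ZMod 2) (ℓ : ℕ) (x : ℕ → I → ZMod 6)
    (h0 : x 0 = 0) (hl : x ℓ = 0)
    (hcov : ∀ p, U p ≠ 0 → ∃ i < ℓ, x i = p) :
    2 * ((Finset.univ.filter (fun y => aMap U y ≠ 0)).card : ℝ) ≤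
      ∑ i ∈ Finset.range ℓ, hamZ6 (x i) (x (i + 1)) := by
  set S := Finset.univ.filter (fun y => aMap U y ≠ 0) with hS
  have key : ∀ y ∈ S, 2 ≤ ∑ i ∈ Finset.range ℓ, z6dist (x i y) (x (i + 1) y) := by
    intro y hy
    rw [hS, Finset.mem_filter] at hy
    have hsum : (∑ v, U v * zbar (v y)) ≠ 0 := hy.2
    obtain ⟨v, -, hv⟩ := Finset.exists_ne_zero_of_sum_ne_zero hsum
    have hUv : U v ≠ 0 := left_ne_zero_of_mul hv
    have hzv : zbar (v y) ≠ 0 := right_ne_zero_of_mul hv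
    have hvy : v y ≠ 0 := by
      intro h; rw [h] at hzv; exact hzv (by decide)
    obtain ⟨i, hi, hxi⟩ := hcov v hUv
    refine z6_tour (fun j => x j y) ℓ i hi ?_ ?_ ?_
    · show x 0 y = 0
      rw [h0]; rfl
    · show x ℓ y = 0
      rw [hl]; rfl
    · show x i y ≠ 0
      rw [hxi]; exact hvy
  have nat_ineq : 2 * S.card ≤ ∑ i ∈ Finset.range ℓ, ∑ y, z6dist (x i y) (x (i + 1) y) := by
    rw [Finset.sum_comm]
    calc 2 * S.card = ∑ _y ∈ S, 2 := by rw [Finset.sum_const, smul_eq_mul, mul_comm]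
      _ ≤ ∑ y ∈ S, ∑ i ∈ Finset.range ℓ, z6dist (x i y) (x (i + 1) y) :=
          Finset.sum_le_sum key
      _ ≤ ∑ y, ∑ i ∈ Finset.range ℓ, z6dist (x i y) (x (i + 1) y) :=
          Finset.sum_le_sum_of_subset (Finset.subset_univ S)
  calc 2 * (S.card : ℝ) = ((2 * S.card : ℕ) : ℝ) := by push_cast; ring
    _ ≤ ((∑ i ∈ Finset.range ℓ, ∑ y, z6dist (x i y) (x (i + 1) y) : ℕ) : ℝ) := by
        exact_mod_cast nat_ineq
    _ = ∑ i ∈ Finset.range ℓ, hamZ6 (x i) (x (i + 1)) := by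
        rw [Nat.cast_sum]
        refine Finset.sum_congr rfl fun i _ => ?_
        rw [hamZ6, Nat.cast_sum]

lemma TSHam_nonneg (A B : (I → ZMod 6) → ZMod 2) : 0 ≤ TSHam A B := by
  rw [TSHam, TS]
  split
  · exact le_refl 0
  · have h : 0 ≤ sInf {L : ℝ | ∃ (ℓ : ℕ) (x : ℕ → I → ZMod 6), 1 ≤ ℓ ∧ x 0 = 0 ∧ x ℓ = 0 ∧
        (∀ p, A p + B p ≠ 0 → ∃ i < ℓ, x i = p) ∧
        L = ∑ i ∈ Finset.range ℓ, hamZ6 (x i) (x (i + 1))} := by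
      apply Real.sInf_nonneg
      rintro L ⟨ℓ, x, -, -, -, -, rfl⟩
      exact Finset.sum_nonneg fun i _ => hamZ6_nonneg _ _
    linarith

end Aux4
section Aux5
open Finset

variable {I : Type*} [Fintype I]

lemma TSHam_Rmap_le (V W' : (I → ZMod 6) → ZMod 2) (hV : Function.support V ⊆ Bset) :
    TSHam V (Rmap W') ≤ TSHam V W' := by
  by_cases hcase : V = Rmap W'
  · rw [TSHam, TS, if_pos hcase]
    exact TSHam_nonneg V W'
  · have hVW : V ≠ W' := by
      rintro rfl
      exact hcase (Rmap_fix V hV).symm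
    rw [TSHam, TSHam, TS, TS, if_neg hcase, if_neg hVW]
    refine (add_le_add_iff_left 1).2 ?_
    set U := V - W' with hUdef
    have hRU : Rmap U = V - Rmap W' := by rw [hUdef, Rmap_sub, Rmap_fix V hV]
    set S := Finset.univ.filter (fun y => aMap U y ≠ 0) with hS
    set lst := S.toList.map (fun y => (Pi.single y 1 : I → ZMod 6)) with hlst
    have hlen : lst.length = S.card := by simp [hlst]
    have hham : ∀ i, hamZ6 (tourOf lst i) 0 ≤ 1 ∧ hamZ6 0 (tourOf lst i) ≤ 1 := by
      refine tourOf_ham_le lst (fun q hq => ?_)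
      rw [hlst] at hq
      obtain ⟨y, -, rfl⟩ := List.mem_map.1 hq
      exact ⟨y, rfl⟩
    have hL'le : (∑ i ∈ Finset.range (lst.length + 1), hamZ6 (tourOf lst i) (tourOf lst (i+1)))
        ≤ 2 * (S.card : ℝ) := by
      have step : ∀ i ∈ Finset.range (lst.length + 1),
          hamZ6 (tourOf lst i) (tourOf lst (i+1)) ≤
            hamZ6 (tourOf lst i) 0 + hamZ6 0 (tourOf lst (i+1)) :=
        fun i _ => hamZ6_tri _ _ _
      have p1 : (∑ i ∈ Finset.range (lst.length + 1), hamZ6 (tourOf lst i) 0)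
          ≤ (lst.length : ℝ) := by
        rw [Finset.sum_range_succ']
        have h0 : hamZ6 (tourOf lst 0) 0 = 0 := by rw [tourOf_zero, hamZ6_self]
        rw [h0, add_zero]
        calc ∑ i ∈ Finset.range lst.length, hamZ6 (tourOf lst (i+1)) 0
            ≤ ∑ _i ∈ Finset.range lst.length, (1:ℝ) :=
              Finset.sum_le_sum fun i _ => (hham (i+1)).1
          _ = lst.length := by simp
      have p2 : (∑ i ∈ Finset.range (lst.length + 1), hamZ6 0 (tourOf lst (i+1)))
          ≤ (lst.length : ℝ) := by
        rw [Finset.sum_range_succ]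
        have hlast : hamZ6 0 (tourOf lst (lst.length + 1)) = 0 := by
          rw [tourOf_last, hamZ6_self]
        rw [hlast, add_zero]
        calc ∑ i ∈ Finset.range lst.length, hamZ6 0 (tourOf lst (i+1))
            ≤ ∑ _i ∈ Finset.range lst.length, (1:ℝ) :=
              Finset.sum_le_sum fun i _ => (hham (i+1)).2
          _ = lst.length := by simp
      calc ∑ i ∈ Finset.range (lst.length + 1), hamZ6 (tourOf lst i) (tourOf lst (i+1))
          ≤ ∑ i ∈ Finset.range (lst.length + 1),
              (hamZ6 (tourOf lst i) 0 + hamZ6 0 (tourOf lst (i+1))) := Finset.sum_le_sum step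
        _ = (∑ i ∈ Finset.range (lst.length + 1), hamZ6 (tourOf lst i) 0)
            + ∑ i ∈ Finset.range (lst.length + 1), hamZ6 0 (tourOf lst (i+1)) :=
            Finset.sum_add_distrib
        _ ≤ (lst.length : ℝ) + lst.length := add_le_add p1 p2
        _ = 2 * (S.card : ℝ) := by rw [hlen]; ring
    have hmem : (∑ i ∈ Finset.range (lst.length + 1), hamZ6 (tourOf lst i) (tourOf lst (i+1)))
        ∈ {L : ℝ | ∃ (ℓ : ℕ) (x : ℕ → I → ZMod 6), 1 ≤ ℓ ∧ x 0 = 0 ∧ x ℓ = 0 ∧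
            (∀ p : I → ZMod 6, V p + Rmap W' p ≠ 0 → ∃ i < ℓ, x i = p) ∧
            L = ∑ i ∈ Finset.range ℓ, hamZ6 (x i) (x (i + 1))} := by
      refine ⟨lst.length + 1, tourOf lst, by omega, tourOf_zero lst, tourOf_last lst, ?_, rfl⟩
      intro p hp
      have hp' : Rmap U p ≠ 0 := by
        rw [hRU, Pi.sub_apply, ← char2_add_eq_sub]
        exact hp
      rw [Rmap_eq_xi] at hp'
      obtain ⟨y, rfl, hy⟩ := xi_ne_zero _ _ hp'
      refine tourOf_mem lst _ ?_
      rw [hlst]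
      exact List.mem_map.2 ⟨y, Finset.mem_toList.2 (Finset.mem_filter.2 ⟨Finset.mem_univ y, hy⟩), rfl⟩
    have hbdd : BddBelow {L : ℝ | ∃ (ℓ : ℕ) (x : ℕ → I → ZMod 6), 1 ≤ ℓ ∧ x 0 = 0 ∧ x ℓ = 0 ∧
        (∀ p : I → ZMod 6, V p + Rmap W' p ≠ 0 → ∃ i < ℓ, x i = p) ∧
        L = ∑ i ∈ Finset.range ℓ, hamZ6 (x i) (x (i + 1))} := by
      refine ⟨0, fun L hL => ?_⟩
      obtain ⟨ℓ, x, -, -, -, -, rfl⟩ := hL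
      exact Finset.sum_nonneg fun i _ => hamZ6_nonneg _ _
    have hupper : sInf {L : ℝ | ∃ (ℓ : ℕ) (x : ℕ → I → ZMod 6), 1 ≤ ℓ ∧ x 0 = 0 ∧ x ℓ = 0 ∧
        (∀ p : I → ZMod 6, V p + Rmap W' p ≠ 0 → ∃ i < ℓ, x i = p) ∧
        L = ∑ i ∈ Finset.range ℓ, hamZ6 (x i) (x (i + 1))} ≤ 2 * (S.card : ℝ) :=
      le_trans (csInf_le hbdd hmem) hL'le
    have hne : {L : ℝ | ∃ (ℓ : ℕ) (x : ℕ → I → ZMod 6), 1 ≤ ℓ ∧ x 0 = 0 ∧ x ℓ = 0 ∧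
        (∀ p : I → ZMod 6, V p + W' p ≠ 0 → ∃ i < ℓ, x i = p) ∧
        L = ∑ i ∈ Finset.range ℓ, hamZ6 (x i) (x (i + 1))}.Nonempty := by
      refine ⟨_, (Finset.univ : Finset (I → ZMod 6)).toList.length + 1, tourOf _, by omega,
        tourOf_zero _, tourOf_last _, fun p _ => tourOf_mem _ p ?_, rfl⟩
      simp [Finset.mem_toList]
    refine le_csInf hne ?_
    rintro L ⟨ℓ, x, -, h0, hl, hcov, rfl⟩
    refine le_trans hupper ?_
    refine le_trans (le_of_eq ?_) (tour_lower U ℓ x h0 hl ?_)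
    · rw [hS]
    · intro p hp
      apply hcov
      rw [hUdef] at hp
      rwa [Pi.sub_apply, ← char2_add_eq_sub] at hp
end Aux5
/-- For a nonempty finite `I` and a subspace `C ≤ Z₂^I` with `1_I ∈ C`,
the subspace `D := span({1_{Z₆^I}} ∪ {L_a : a ∈ C}) ≤ Z₂^{Z₆^I}` satisfies:
(i) `D` is invariant under translations of `Z₆^I`;
(ii) `D^⊥ ∩ {spt ⊆ B} = ξ(C^⊥)`;
(iii) for `V, V'` supported on `B`, the infimum `inf {TS_Ham(V, W) : W ∈ V' + D^⊥}` is
attained at some `W ∈ V' + D^⊥` supported on `B`. -/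
theorem Dspan_properties {I : Type*} [Fintype I] [Nonempty I]
    (C : Submodule (ZMod 2) (I → ZMod 2)) (hC : (fun _ => (1 : ZMod 2)) ∈ C) :
    (∀ v : I → ZMod 6, ∀ F ∈ Dspan (C : Set (I → ZMod 2)),
      (fun w => F (w - v)) ∈ Dspan (C : Set (I → ZMod 2))) ∧
    (∀ W : (I → ZMod 6) → ZMod 2,
      (W ∈ DperpSet (C : Set (I → ZMod 2)) ∧ Function.support W ⊆ Bset) ↔
      (∃ a ∈ perp2 (C : Set (I → ZMod 2)), xi a = W)) ∧
    (∀ V V' : (I → ZMod 6) → ZMod 2,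
      Function.support V ⊆ Bset → Function.support V' ⊆ Bset →
      ∃ W : (I → ZMod 6) → ZMod 2,
        W - V' ∈ DperpSet (C : Set (I → ZMod 2)) ∧ Function.support W ⊆ Bset ∧
        ∀ W' : (I → ZMod 6) → ZMod 2, W' - V' ∈ DperpSet (C : Set (I → ZMod 2)) →
          TSHam V W ≤ TSHam V W') := by
  refine ⟨?_, ?_, ?_⟩
  · -- (i) translation invariance
    intro v F hF
    induction hF using Submodule.span_induction with
    | mem y hy =>
        rcases hy with hy | ⟨c, hc, rfl⟩
        · rw [Set.mem_singleton_iff] at hy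
          subst hy
          exact Submodule.subset_span (Or.inl rfl)
        · have heq : (fun w => La c (w - v)) =
              La c + (La c v) • (fun _ => (1 : ZMod 2)) := by
            funext w
            simp only [Pi.add_apply, Pi.smul_apply, smul_eq_mul, mul_one]
            rw [La, La, La, ← Finset.sum_add_distrib]
            refine Finset.sum_congr rfl fun x _ => ?_
            rw [Pi.sub_apply, zbar_sub, add_mul]
          rw [heq]
          exact Submodule.add_mem _ (Submodule.subset_span (Or.inr ⟨c, hc, rfl⟩))
            (Submodule.smul_mem _ _ (Submodule.subset_span (Or.inl rfl)))
    | zero => exact Submodule.zero_mem _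
    | add A B hA hB ihA ihB => exact Submodule.add_mem _ ihA ihB
    | smul r A hA ihA => exact Submodule.smul_mem _ r ihA
  · -- (ii) D^⊥ ∩ {spt ⊆ B} = ξ(C^⊥)
    intro W
    constructor
    · rintro ⟨hW, hsupp⟩
      refine ⟨fun x => W (Pi.single x 1), ?_, (eq_xi_of_support W hsupp).symm⟩
      intro c hc
      have h := hW _ (Submodule.subset_span (Or.inr ⟨c, hc, rfl⟩))
      rw [eq_xi_of_support W hsupp] at h
      rw [ipF, sum_xi_mul] at h
      simp only [La_single] at h
      rw [ip2]
      exact h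
    · rintro ⟨a, ha, rfl⟩
      refine ⟨?_, support_xi a⟩
      rw [mem_DperpSet_iff]
      constructor
      · have h := ha _ hC
        rw [ip2] at h
        rw [ipF, sum_xi_mul]
        simpa using h
      · intro c hc
        have h := ha c hc
        rw [ip2] at h
        rw [ipF, sum_xi_mul]
        simp only [La_single]
        exact h
  · -- (iii) attainment of the infimum on B-supported representatives
    intro V V' hV hV'
    have hV'mem : V' ∈ Finset.univ.filter (fun W : (I → ZMod 6) → ZMod 2 =>
        (W - V') ∈ DperpSet (C : Set (I → ZMod 2)) ∧ Function.support W ⊆ Bset) := by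
      simp only [Finset.mem_filter]
      refine ⟨Finset.mem_univ _, ?_, hV'⟩
      rw [sub_self]
      exact zero_mem_Dperp
    obtain ⟨W, hWT, hmin⟩ := Finset.exists_min_image
      (Finset.univ.filter (fun W : (I → ZMod 6) → ZMod 2 =>
        (W - V') ∈ DperpSet (C : Set (I → ZMod 2)) ∧ Function.support W ⊆ Bset))
      (fun W => TSHam V W) ⟨V', hV'mem⟩
    rw [Finset.mem_filter] at hWT
    refine ⟨W, hWT.2.1, hWT.2.2, ?_⟩
    intro W' hW'
    have hsub : Rmap W' - V' = Rmap (W' - V') := by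
      rw [Rmap_sub, Rmap_fix V' hV']
    have hRW' : Rmap W' ∈ Finset.univ.filter (fun W : (I → ZMod 6) → ZMod 2 =>
        (W - V') ∈ DperpSet (C : Set (I → ZMod 2)) ∧ Function.support W ⊆ Bset) := by
      simp only [Finset.mem_filter]
      refine ⟨Finset.mem_univ _, ?_, ?_⟩
      · rw [hsub]
        exact Rmap_mem_Dperp hC _ hW'
      · rw [Rmap_eq_xi]
        exact support_xi _
    calc TSHam V W ≤ TSHam V (Rmap W') := hmin _ hRW'
      _ ≤ TSHam V W' := TSHam_Rmap_le V W' hV
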